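/- Let L be a lattice and extend the generators of the dimension monoid to arbitrary pairs by Δ(x,y) := Δ(x ∧ y, x ∨ y). Then for all x, y, z ∈ L: (i) Δ(x,y) = 0 in Dim L if and only if x = y; (ii) Δ(x,y) = Δ(y,x); (iii) Δ(x,z) ≤ Δ(x,y) + Δ(y,z), where ≤ is the algebraic preorder of Dim L. -/

import Mathlib

section Dim

variable (L : Type*) [Lattice L]

/-- Generators of the dimension monoid: pairs `x ≤ y` in `L`. -/
abbrev DimGen := {p : L × L // p.1 ≤ p.2}

/-- The free commutative monoid on the generators. -/
abbrev DimFree := DimGen L →₀ ℕ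

/-- The defining relations (D0), (D1), (D2) of the dimension monoid. -/
inductive DimRel : DimFree L → DimFree L → Prop
  | d0 (x : L) : DimRel (Finsupp.single ⟨(x, x), le_rfl⟩ 1) 0
  | d1 (x y z : L) (hxy : x ≤ y) (hyz : y ≤ z) :
      DimRel (Finsupp.single ⟨(x, z), hxy.trans hyz⟩ 1)
        (Finsupp.single ⟨(x, y), hxy⟩ 1 + Finsupp.single ⟨(y, z), hyz⟩ 1)
  | d2 (x y : L) : DimRel (Finsupp.single ⟨(x ⊓ y, x), inf_le_left⟩ 1)
        (Finsupp.single ⟨(y, x ⊔ y), le_sup_right⟩ 1)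

/-- The smallest monoid congruence containing the defining relations. -/
noncomputable def DimCon : AddCon (DimFree L) := addConGen (DimRel L)

/-- The dimension monoid of a lattice `L`. -/
abbrev DimMonoid := (DimCon L).Quotient

variable {L}

/-- The extended generator `Δ(x,y) := Δ(x ⊓ y, x ⊔ y)` of the dimension monoid. -/
noncomputable def dimDelta (x y : L) : DimMonoid L :=
  (DimCon L).mk' (Finsupp.single ⟨(x ⊓ y, x ⊔ y), inf_le_sup⟩ 1)

end Dim

namespace DimAux

variable {L : Type*} [Lattice L]

/-- `Δ(a,b)` for `a ≤ b`. -/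
noncomputable def D (a b : L) (h : a ≤ b) : DimMonoid L :=
  (DimCon L).mk' (Finsupp.single ⟨(a, b), h⟩ 1)

lemma D_congr {a b a' b' : L} (h : a ≤ b) (ha : a = a') (hb : b = b') :
    D a b h = D a' b' (ha ▸ hb ▸ h) := by subst ha; subst hb; rfl

lemma rel_eq {p q : DimFree L} (h : DimRel L p q) :
    (DimCon L).mk' p = (DimCon L).mk' q :=
  (AddCon.eq _).2 (AddConGen.Rel.of _ _ h)

lemma e0 (x : L) (h : x ≤ x) : D x x h = 0 := by
  have := rel_eq (DimRel.d0 x)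
  simpa [D] using this

lemma e1 (x y z : L) (hxy : x ≤ y) (hyz : y ≤ z) (hxz : x ≤ z) :
    D x z hxz = D x y hxy + D y z hyz := by
  have := rel_eq (DimRel.d1 x y z hxy hyz)
  simpa [D, map_add] using this

lemma e2 (x y : L) : D (x ⊓ y) x inf_le_left = D y (x ⊔ y) le_sup_right :=
  rel_eq (DimRel.d2 x y)

lemma dimDelta_eq (x y : L) : dimDelta x y = D (x ⊓ y) (x ⊔ y) inf_le_sup := rfl

/-- `Δ(a⊓c, b⊓c) ≤ Δ(a,b)` for `a ≤ b`. -/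
lemma meet_le {a b : L} (hab : a ≤ b) (c : L) :
    ∃ e, D (a ⊓ c) (b ⊓ c) (inf_le_inf_right c hab) + e = D a b hab := by
  have eq1 : (b ⊓ c) ⊓ a = a ⊓ c := by
    rw [inf_comm, ← inf_assoc, inf_eq_left.2 hab]
  have eq2 : (b ⊓ c) ⊔ a = a ⊔ (b ⊓ c) := sup_comm _ _
  have key : D (a ⊓ c) (b ⊓ c) (inf_le_inf_right c hab)
      = D a (a ⊔ (b ⊓ c)) le_sup_left := by
    calc D (a ⊓ c) (b ⊓ c) (inf_le_inf_right c hab)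
        = D ((b ⊓ c) ⊓ a) (b ⊓ c) inf_le_left := (D_congr _ eq1 rfl).symm
      _ = D a ((b ⊓ c) ⊔ a) le_sup_right := e2 (b ⊓ c) a
      _ = D a (a ⊔ (b ⊓ c)) le_sup_left := D_congr _ rfl eq2
  have hm : a ⊔ (b ⊓ c) ≤ b := sup_le hab inf_le_left
  refine ⟨D (a ⊔ (b ⊓ c)) b hm, ?_⟩
  rw [key, ← e1 a (a ⊔ (b ⊓ c)) b le_sup_left hm hab]

/-- `Δ(a⊔c, b⊔c) ≤ Δ(a,b)` for `a ≤ b`. -/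
lemma join_le {a b : L} (hab : a ≤ b) (c : L) :
    ∃ e, D (a ⊔ c) (b ⊔ c) (sup_le_sup_right hab c) + e = D a b hab := by
  have eq1 : b ⊔ (a ⊔ c) = b ⊔ c := by
    rw [← sup_assoc, sup_eq_left.2 hab]
  have key : D (a ⊔ c) (b ⊔ c) (sup_le_sup_right hab c)
      = D (b ⊓ (a ⊔ c)) b inf_le_left := by
    calc D (a ⊔ c) (b ⊔ c) (sup_le_sup_right hab c)
        = D (a ⊔ c) (b ⊔ (a ⊔ c)) le_sup_right := (D_congr _ rfl eq1).symm
      _ = D (b ⊓ (a ⊔ c)) b inf_le_left := (e2 b (a ⊔ c)).symm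
  have hm : a ≤ b ⊓ (a ⊔ c) := le_inf hab le_sup_left
  refine ⟨D a (b ⊓ (a ⊔ c)) hm, ?_⟩
  rw [key, add_comm, ← e1 a (b ⊓ (a ⊔ c)) b hm inf_le_left hab]

open scoped Classical in
/-- Invariant used to separate points: `0` on degenerate generators, `⊤` otherwise. -/
noncomputable def flag : DimGen L → ℕ∞ := fun p => if p.1.1 = p.1.2 then 0 else ⊤

open scoped Classical in
lemma flag_apply {a b : L} (h : a ≤ b) :
    flag (⟨(a, b), h⟩ : DimGen L) = if a = b then (0 : ℕ∞) else ⊤ := rfl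

/-- The induced homomorphism on the free commutative monoid. -/
noncomputable def F : DimFree L →+ ℕ∞ :=
  Finsupp.liftAddHom fun a => multiplesHom ℕ∞ (flag a)

lemma F_single (a : DimGen L) : F (Finsupp.single a 1) = flag a := by
  simp [F, Finsupp.liftAddHom_apply_single]

lemma dimCon_le_ker : DimCon L ≤ AddCon.ker (F (L := L)) := by
  refine AddCon.addConGen_le.2 ?_
  intro p q hpq
  rw [AddCon.ker_rel]
  cases hpq with
  | d0 a => simp [F_single, flag_apply]
  | d1 a b c hab hbc =>
    rw [map_add, F_single, F_single, F_single, flag_apply, flag_apply, flag_apply]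
    rcases eq_or_ne a c with h | h
    · have hba : b = a := le_antisymm (h ▸ hbc) hab
      simp [h, hba]
    · have : a ≠ b ∨ b ≠ c := by
        by_contra hc
        push_neg at hc
        exact h (hc.1.trans hc.2)
      rcases this with h' | h'
      · simp [h, h']
      · simp [h, h']
  | d2 a b =>
    rw [F_single, F_single, flag_apply, flag_apply]
    by_cases hab : a ≤ b
    · rw [if_pos (inf_eq_left.2 hab), if_pos (sup_eq_right.2 hab).symm]
    · rw [if_neg (fun h => hab (inf_eq_left.1 h)),
        if_neg (fun h => hab (sup_eq_right.1 h.symm))]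

end DimAux

/-- **Lemma 1.2.** The extended map `Δ` is a `Dim L`-valued distance on `L`:
it separates points, is symmetric, and satisfies the triangle inequality with
respect to the algebraic preorder of `Dim L`. -/
theorem dimDelta_distance {L : Type*} [Lattice L] (x y z : L) :
    (dimDelta x y = 0 ↔ x = y) ∧
    dimDelta x y = dimDelta y x ∧
    ∃ c : DimMonoid L, dimDelta x z + c = dimDelta x y + dimDelta y z := by
  refine ⟨⟨?_, ?_⟩, ?_, ?_⟩
  · -- Δ(x,y) = 0 → x = y
    intro h0
    have hrel : (DimCon L) (Finsupp.single ⟨(x ⊓ y, x ⊔ y), inf_le_sup⟩ 1) 0 := by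
      have : (DimCon L).mk' (Finsupp.single ⟨(x ⊓ y, x ⊔ y), inf_le_sup⟩ 1)
          = (DimCon L).mk' 0 := by simpa [dimDelta] using h0
      exact (AddCon.eq _).1 this
    have hF0 : DimAux.F (Finsupp.single ⟨(x ⊓ y, x ⊔ y), inf_le_sup⟩ 1) = 0 := by
      have := DimAux.dimCon_le_ker hrel
      rw [AddCon.ker_rel] at this
      simpa using this
    rw [DimAux.F_single, DimAux.flag_apply] at hF0
    by_cases hxy : x ⊓ y = x ⊔ y
    · have hle : x ⊔ y ≤ x ⊓ y := hxy.ge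
      exact le_antisymm (le_sup_left.trans (hle.trans inf_le_right))
        (le_sup_right.trans (hle.trans inf_le_left))
    · rw [if_neg hxy] at hF0
      exact absurd hF0 (by simp)
  · -- x = y → Δ(x,y) = 0
    rintro rfl
    rw [DimAux.dimDelta_eq, DimAux.D_congr _ (inf_idem x) (sup_idem x), DimAux.e0]
  · -- symmetry
    rw [DimAux.dimDelta_eq, DimAux.dimDelta_eq,
      DimAux.D_congr _ (inf_comm x y) (sup_comm x y)]
  · -- triangle inequality
    have h1 : x ⊓ y ⊓ z ≤ x ⊓ z := inf_le_inf_right z inf_le_left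
    have h2 : x ⊔ z ≤ x ⊔ y ⊔ z := sup_le_sup_right le_sup_left z
    have h3 : x ⊓ y ⊓ z ≤ y ⊓ z := inf_le_inf_right z inf_le_right
    have h4 : y ⊓ z ≤ y := inf_le_left
    have h5 : y ≤ y ⊔ z := le_sup_left
    have h6 : y ⊔ z ≤ x ⊔ y ⊔ z := sup_le_sup_right le_sup_right z
    have hbig : x ⊓ y ⊓ z ≤ x ⊔ y ⊔ z := h1.trans (inf_le_sup.trans h2)
    -- decompose the big interval through y
    have hGy : DimAux.D (x ⊓ y ⊓ z) (x ⊔ y ⊔ z) hbig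
        = DimAux.D (x ⊓ y ⊓ z) (y ⊓ z) h3 + DimAux.D (y ⊓ z) y h4
          + (DimAux.D y (y ⊔ z) h5 + DimAux.D (y ⊔ z) (x ⊔ y ⊔ z) h6) := by
      rw [DimAux.e1 (x ⊓ y ⊓ z) y (x ⊔ y ⊔ z) (h3.trans h4) (h5.trans h6) hbig,
        DimAux.e1 (x ⊓ y ⊓ z) (y ⊓ z) y h3 h4, DimAux.e1 y (y ⊔ z) (x ⊔ y ⊔ z) h5 h6]
    -- decompose the big interval through x ⊓ z, x ⊔ z
    have hGx : DimAux.D (x ⊓ y ⊓ z) (x ⊔ y ⊔ z) hbig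
        = DimAux.D (x ⊓ y ⊓ z) (x ⊓ z) h1
          + (dimDelta x z + DimAux.D (x ⊔ z) (x ⊔ y ⊔ z) h2) := by
      rw [DimAux.e1 (x ⊓ y ⊓ z) (x ⊓ z) (x ⊔ y ⊔ z) h1 (inf_le_sup.trans h2) hbig,
        DimAux.e1 (x ⊓ z) (x ⊔ z) (x ⊔ y ⊔ z) inf_le_sup h2, DimAux.dimDelta_eq]
    -- the two comparison steps
    obtain ⟨c1, hc1⟩ := DimAux.meet_le (inf_le_right : x ⊓ y ≤ y) (y ⊓ z)
    obtain ⟨c2, hc2⟩ := DimAux.join_le (le_sup_right : y ≤ x ⊔ y) (y ⊔ z)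
    have eqm2 : y ⊓ (y ⊓ z) = y ⊓ z := by rw [← inf_assoc, inf_idem]
    have eqm : (x ⊓ y) ⊓ (y ⊓ z) = x ⊓ y ⊓ z := by
      rw [inf_assoc x y (y ⊓ z), eqm2, ← inf_assoc]
    have eqj : y ⊔ (y ⊔ z) = y ⊔ z := by rw [← sup_assoc, sup_idem]
    have eqj2 : (x ⊔ y) ⊔ (y ⊔ z) = x ⊔ y ⊔ z := by
      rw [sup_assoc x y (y ⊔ z), eqj, ← sup_assoc]
    rw [DimAux.D_congr _ eqm eqm2] at hc1
    rw [DimAux.D_congr _ eqj eqj2] at hc2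
    -- decompose Δ(x,y) and Δ(y,z)
    have hxy : dimDelta x y = DimAux.D (x ⊓ y) y inf_le_right
        + DimAux.D y (x ⊔ y) le_sup_right := by
      rw [DimAux.dimDelta_eq,
        DimAux.e1 (x ⊓ y) y (x ⊔ y) inf_le_right le_sup_right]
    have hyz : dimDelta y z = DimAux.D (y ⊓ z) y h4 + DimAux.D y (y ⊔ z) h5 := by
      rw [DimAux.dimDelta_eq, DimAux.e1 (y ⊓ z) y (y ⊔ z) h4 h5]
    refine ⟨DimAux.D (x ⊓ y ⊓ z) (x ⊓ z) h1 + DimAux.D (x ⊔ z) (x ⊔ y ⊔ z) h2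
      + c1 + c2, ?_⟩
    have lhs_eq : dimDelta x z + (DimAux.D (x ⊓ y ⊓ z) (x ⊓ z) h1
        + DimAux.D (x ⊔ z) (x ⊔ y ⊔ z) h2 + c1 + c2)
        = DimAux.D (x ⊓ y ⊓ z) (x ⊔ y ⊔ z) hbig + c1 + c2 := by
      rw [hGx]; abel
    rw [lhs_eq, hGy, hxy, hyz, ← hc1, ← hc2]
    abel
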